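/- Let A ∈ ℝ^{n×n} with ‖A⁻¹‖₂ = η < 1, let x* be the unique solution of A x - |x| = b, and suppose M is a matrix with ‖M^s‖₂ < (1-η)/(1+η). If each outer step of the Picard-CSCS iteration computes x^{(k+1)} = M^{l_k} x^{(k)} + (I - M^{l_k}) A^{-1}(|x^{(k)}| + b) with l_k ≥ s, then ‖x^{(k+1)} - x*‖₂ ≤ θ ‖x^{(k)} - x*‖₂ for some θ < 1 independent of k; consequently x^{(k)} → x*. -/

import Mathlib

open scoped Matrix.Norms.L2Operator
open Filter Topology

noncomputable def enorm₂ {n : ℕ} (v : Fin n → ℝ) : ℝ :=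
  ‖(EuclideanSpace.equiv (Fin n) ℝ).symm v‖

def absVec {n : ℕ} (x : Fin n → ℝ) : Fin n → ℝ := fun i => |x i|

lemma enorm_nonneg' {n : ℕ} (v : Fin n → ℝ) : 0 ≤ enorm₂ v := norm_nonneg _

lemma enorm₂_add_le {n : ℕ} (u v : Fin n → ℝ) : enorm₂ (u + v) ≤ enorm₂ u + enorm₂ v := by
  unfold enorm₂
  rw [map_add]
  exact norm_add_le _ _

lemma enorm_mulVec_le {n : ℕ} (B : Matrix (Fin n) (Fin n) ℝ) (v : Fin n → ℝ) :
    enorm₂ (B.mulVec v) ≤ ‖B‖ * enorm₂ v :=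
  B.l2_opNorm_mulVec ((EuclideanSpace.equiv (Fin n) ℝ).symm v)

lemma enorm_absVec_sub {n : ℕ} (u v : Fin n → ℝ) :
    enorm₂ (absVec u - absVec v) ≤ enorm₂ (u - v) := by
  unfold enorm₂
  rw [EuclideanSpace.norm_eq, EuclideanSpace.norm_eq]
  apply Real.sqrt_le_sqrt
  apply Finset.sum_le_sum
  intro i _
  have h : ‖(absVec u - absVec v) i‖ ≤ ‖(u - v) i‖ := by
    simp only [Pi.sub_apply, absVec, Real.norm_eq_abs]
    exact abs_abs_sub_abs_le_abs_sub _ _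
  exact pow_le_pow_left₀ (norm_nonneg _) h 2

/-- Convergence of the Picard-CSCS iteration: if `‖A⁻¹‖₂ = η < 1` and the inner
iteration matrix satisfies `‖M^t‖₂ < (1-η)/(1+η)` for all `t ≥ s`, then the outer
iterates contract towards the unique solution `x*` of `A x - |x| = b` and converge. -/
theorem picard_cscs_convergence {n : ℕ} (A : Matrix (Fin n) (Fin n) ℝ)
    (hA : IsUnit A) (η : ℝ) (hη : η = ‖A⁻¹‖) (hη1 : η < 1)
    (b xstar : Fin n → ℝ)
    (hxstar : A.mulVec xstar - absVec xstar = b)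
    (M : Matrix (Fin n) (Fin n) ℝ) (s : ℕ)
    (hM : ∀ t : ℕ, s ≤ t → ‖M ^ t‖ < (1 - η) / (1 + η))
    (l : ℕ → ℕ) (hl : ∀ k, s ≤ l k)
    (x : ℕ → Fin n → ℝ)
    (hstep : ∀ k, x (k + 1) =
      (M ^ l k).mulVec (x k) +
        (((1 : Matrix (Fin n) (Fin n) ℝ) - M ^ l k) * A⁻¹).mulVec (absVec (x k) + b)) :
    (∃ θ : ℝ, 0 ≤ θ ∧ θ < 1 ∧
      ∀ k, enorm₂ (x (k + 1) - xstar) ≤ θ * enorm₂ (x k - xstar)) ∧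
    Tendsto x atTop (nhds xstar) := by
  have hη0 : 0 ≤ η := hη ▸ norm_nonneg _
  have h1η : (0:ℝ) < 1 + η := by linarith
  set τ : ℝ := (1 - η) / (1 + η) with hτ
  have hτ1 : τ ≤ 1 := by
    rw [hτ, div_le_one h1η]; linarith
  -- uniform bound c on ‖M^t‖ for t ≥ s
  have hIcc : (Finset.Icc s (2 * s)).Nonempty := ⟨s, by simp [Nat.le_mul_of_pos_left s two_pos]⟩
  set c : ℝ := (Finset.Icc s (2 * s)).sup' hIcc (fun t => ‖M ^ t‖) with hc
  have hc0 : 0 ≤ c := le_trans (norm_nonneg (M ^ s))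
    (Finset.le_sup' (fun t => ‖M ^ t‖) (by simp [Nat.le_mul_of_pos_left s two_pos] : s ∈ Finset.Icc s (2*s)))
  have hcτ : c < τ := by
    rw [hc, Finset.sup'_lt_iff]
    intro t ht
    exact hM t (Finset.mem_Icc.mp ht).1
  have hMs1 : ‖M ^ s‖ ≤ 1 := le_of_lt (lt_of_lt_of_le (hM s le_rfl) hτ1)
  have hbound : ∀ t, s ≤ t → ‖M ^ t‖ ≤ c := by
    rcases Nat.eq_zero_or_pos s with hs0 | hs1
    · subst hs0
      have hone : ‖(1 : Matrix (Fin n) (Fin n) ℝ)‖ < 1 := by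
        have := hM 0 le_rfl
        simp only [pow_zero] at this
        linarith
      intro t _
      have hz : ‖M ^ t‖ = 0 := by
        have h1 := Matrix.l2_opNorm_mul (M ^ t) (1 : Matrix (Fin n) (Fin n) ℝ)
        rw [mul_one] at h1
        nlinarith [norm_nonneg (M ^ t)]
      rw [hz]; exact hc0
    · intro t
      induction t using Nat.strong_induction_on with
      | _ t ih =>
        intro hst
        by_cases h2 : t ≤ 2 * s
        · exact Finset.le_sup' (fun t => ‖M ^ t‖) (Finset.mem_Icc.mpr ⟨hst, h2⟩)
        · push_neg at h2
          have : M ^ t = M ^ (t - s) * M ^ s := by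
            rw [← pow_add]; congr 1; omega
          rw [this]
          calc ‖M ^ (t-s) * M ^ s‖ ≤ ‖M ^ (t-s)‖ * ‖M ^ s‖ := Matrix.l2_opNorm_mul _ _
            _ ≤ c * 1 := mul_le_mul (ih (t - s) (by omega) (by omega)) hMs1 (norm_nonneg _) hc0
            _ = c := mul_one c
  set θ : ℝ := c + (1 + c) * η with hθdef
  have hθ0 : 0 ≤ θ := by positivity
  have hθ1 : θ < 1 := by
    have : τ + (1 + τ) * η = 1 := by
      rw [hτ]; field_simp; ring
    nlinarith
  -- A⁻¹ (|x*| + b) = x*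
  have hAinv : A⁻¹ * A = 1 := Matrix.nonsing_inv_mul A (A.isUnit_iff_isUnit_det.mp hA)
  have hfixv : A⁻¹.mulVec (absVec xstar + b) = xstar := by
    have h1 : absVec xstar + b = A.mulVec xstar := by rw [← hxstar]; abel
    rw [h1, Matrix.mulVec_mulVec, hAinv, Matrix.one_mulVec]
  -- contraction step
  have hcontr : ∀ k, enorm₂ (x (k + 1) - xstar) ≤ θ * enorm₂ (x k - xstar) := by
    intro k
    set L := l k
    have hML : ‖M ^ L‖ ≤ c := hbound L (hl k)
    have hfix : xstar = (M ^ L).mulVec xstar +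
        (((1 : Matrix (Fin n) (Fin n) ℝ) - M ^ L) * A⁻¹).mulVec (absVec xstar + b) := by
      rw [← Matrix.mulVec_mulVec, hfixv, Matrix.sub_mulVec, Matrix.one_mulVec]
      abel
    have hdiff : x (k + 1) - xstar = (M ^ L).mulVec (x k - xstar) +
        (((1 : Matrix (Fin n) (Fin n) ℝ) - M ^ L) * A⁻¹).mulVec
          (absVec (x k) - absVec xstar) := by
      conv_lhs => rw [hstep k, hfix]
      simp only [Matrix.mulVec_sub, Matrix.mulVec_add]
      abel
    have hnB : ‖((1 : Matrix (Fin n) (Fin n) ℝ) - M ^ L) * A⁻¹‖ ≤ (1 + c) * η := by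
      have h1 : ((1 : Matrix (Fin n) (Fin n) ℝ) - M ^ L) * A⁻¹ = A⁻¹ - M ^ L * A⁻¹ := by
        rw [Matrix.sub_mul, Matrix.one_mul]
      rw [h1]
      calc ‖A⁻¹ - M ^ L * A⁻¹‖ ≤ ‖A⁻¹‖ + ‖M ^ L * A⁻¹‖ := norm_sub_le _ _
        _ ≤ ‖A⁻¹‖ + ‖M ^ L‖ * ‖A⁻¹‖ := by
            have := Matrix.l2_opNorm_mul (M ^ L) A⁻¹; linarith
        _ ≤ η + c * η := by
            rw [hη]
            have := norm_nonneg A⁻¹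
            nlinarith
        _ = (1 + c) * η := by ring
    calc enorm₂ (x (k + 1) - xstar)
        ≤ enorm₂ ((M ^ L).mulVec (x k - xstar)) +
          enorm₂ ((((1 : Matrix (Fin n) (Fin n) ℝ) - M ^ L) * A⁻¹).mulVec
            (absVec (x k) - absVec xstar)) := by rw [hdiff]; exact enorm₂_add_le _ _
      _ ≤ ‖M ^ L‖ * enorm₂ (x k - xstar) +
          ‖((1 : Matrix (Fin n) (Fin n) ℝ) - M ^ L) * A⁻¹‖ *
            enorm₂ (absVec (x k) - absVec xstar) := by
            gcongr <;> [exact enorm_mulVec_le _ _; exact enorm_mulVec_le _ _]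
      _ ≤ c * enorm₂ (x k - xstar) + ((1 + c) * η) * enorm₂ (x k - xstar) :=
            add_le_add (mul_le_mul_of_nonneg_right hML (enorm_nonneg' _))
              (mul_le_mul hnB (enorm_absVec_sub _ _) (enorm_nonneg' _) (by positivity))
      _ = θ * enorm₂ (x k - xstar) := by ring
  refine ⟨⟨θ, hθ0, hθ1, hcontr⟩, ?_⟩
  -- convergence
  have hgeo : ∀ k, enorm₂ (x k - xstar) ≤ θ ^ k * enorm₂ (x 0 - xstar) := by
    intro k
    induction k with
    | zero => simp
    | succ k ih =>
      calc enorm₂ (x (k+1) - xstar) ≤ θ * enorm₂ (x k - xstar) := hcontr k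
        _ ≤ θ * (θ ^ k * enorm₂ (x 0 - xstar)) := by nlinarith [enorm_nonneg' (x k - xstar)]
        _ = θ ^ (k+1) * enorm₂ (x 0 - xstar) := by ring
  have htend0 : Tendsto (fun k => enorm₂ (x k - xstar)) atTop (nhds 0) := by
    have h1 : Tendsto (fun k : ℕ => θ ^ k * enorm₂ (x 0 - xstar)) atTop (nhds 0) := by
      have := (tendsto_pow_atTop_nhds_zero_of_lt_one hθ0 hθ1).mul_const (enorm₂ (x 0 - xstar))
      simpa using this
    exact squeeze_zero (fun k => enorm_nonneg' _) hgeo h1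
  have hEt : Tendsto (fun k => (EuclideanSpace.equiv (Fin n) ℝ).symm (x k)) atTop
      (nhds ((EuclideanSpace.equiv (Fin n) ℝ).symm xstar)) := by
    rw [tendsto_iff_norm_sub_tendsto_zero]
    have heq : (fun k => ‖(EuclideanSpace.equiv (Fin n) ℝ).symm (x k) -
        (EuclideanSpace.equiv (Fin n) ℝ).symm xstar‖) = fun k => enorm₂ (x k - xstar) := by
      funext k; rw [← map_sub]; rfl
    rw [heq]; exact htend0
  have := ((EuclideanSpace.equiv (Fin n) ℝ).continuous.tendsto _).comp hEt
  exact this
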